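/- Let s and t be positive integers and let M be a matroid with the (s,2s,t,2t)-property. If M has an s-echidna (S_1,…,S_n) with n ≥ max{s+2t−1, 2s+t−1, 3s+t−3}, then (S_1,…,S_n) extends to a partition (S_1,…,S_n,S_{n+1},…,S_m) of all of E(M) that is simultaneously an s-echidna and a t-coechidna of M. -/

import Mathlib

open Set Function

namespace Matroid

variable {α : Type*}

/-- A circuit of a matroid: a minimal dependent set. -/
def IsCircuit' (M : Matroid α) (C : Set α) : Prop := Minimal M.Dep C

/-- A cocircuit of a matroid: a circuit of the dual matroid. -/
def IsCocircuit' (M : Matroid α) (C : Set α) : Prop := M✶.IsCircuit' C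

/-- The `ℕ`-valued rank of a set `X` in a matroid `M`:
the size of a largest independent subset of `X`. -/
noncomputable def rk' (M : Matroid α) (X : Set α) : ℕ :=
  sSup {n : ℕ | ∃ I, M.Indep I ∧ I ⊆ X ∧ I.ncard = n}

/-- The connectivity function `λ(X) = r(X) + r(E − X) − r(M)`. -/
noncomputable def lam' (M : Matroid α) (X : Set α) : ℕ :=
  M.rk' X + M.rk' (M.E \ X) - M.rk' M.E

/-- The `(s,u,t,v)`-property: every `s`-element subset of the ground set is contained in a
circuit of size `u`, and every `t`-element subset is contained in a cocircuit of size `v`. -/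
def HasProp (M : Matroid α) (s u t v : ℕ) : Prop :=
  (∀ S ⊆ M.E, S.ncard = s → ∃ C, M.IsCircuit' C ∧ C.ncard = u ∧ S ⊆ C) ∧
  (∀ T ⊆ M.E, T.ncard = t → ∃ C, M.IsCocircuit' C ∧ C.ncard = v ∧ T ⊆ C)

/-- A `t`-echidna of order `n`: a family of `n` pairwise disjoint `2`-element subsets of the
ground set (spines) such that the union of any `t` spines is a circuit.
(A `t`-coechidna of `M` is a `t`-echidna of `M✶`.) -/
def IsEchidna (M : Matroid α) (t : ℕ) {n : ℕ} (S : Fin n → Set α) : Prop :=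
  (∀ i, S i ⊆ M.E) ∧ (∀ i, (S i).ncard = 2) ∧
  Pairwise (Function.onFun Disjoint S) ∧
  ∀ I : Finset (Fin n), I.card = t → M.IsCircuit' (⋃ i ∈ I, S i)

/-- `M` is an `(s,t)`-spike with associated partition `(A 1, …, A m)`: the `A i` are `m`
pairwise disjoint pairs partitioning the ground set, with `m ≥ max s t`, such that the union of
any `s` pairs is a circuit and the union of any `t` pairs is a cocircuit. -/
def IsSpike (M : Matroid α) (s t : ℕ) {m : ℕ} (A : Fin m → Set α) : Prop :=
  max s t ≤ m ∧ (⋃ i, A i) = M.E ∧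
  Pairwise (Function.onFun Disjoint A) ∧ (∀ i, (A i).ncard = 2) ∧
  (∀ I : Finset (Fin m), I.card = s → M.IsCircuit' (⋃ i ∈ I, A i)) ∧
  (∀ I : Finset (Fin m), I.card = t → M.IsCocircuit' (⋃ i ∈ I, A i))

/-! ### Auxiliary lemmas -/

section Aux

variable {M : Matroid α} {C K X : Set α}

lemma IsCircuit'.dep (hC : M.IsCircuit' C) : M.Dep C := hC.1

lemma IsCircuit'.subset_ground' (hC : M.IsCircuit' C) : C ⊆ M.E := hC.1.subset_ground

lemma IsCocircuit'.subset_ground' (hK : M.IsCocircuit' K) : K ⊆ M.E :=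
  hK.1.subset_ground

lemma IsCircuit'.diff_singleton_indep (hC : M.IsCircuit' C) {x : α} (hx : x ∈ C) :
    M.Indep (C \ {x}) := by
  have hsub : C \ {x} ⊆ M.E := diff_subset.trans hC.subset_ground'
  rw [← not_dep_iff hsub]
  intro hdep
  exact (hC.2 hdep diff_subset hx).2 rfl

/-- Orthogonality: a circuit and a cocircuit cannot meet in exactly one element. -/
lemma IsCircuit'.inter_cocircuit_ne_singleton (hC : M.IsCircuit' C) (hK : M.IsCocircuit' K)
    (x : α) : C ∩ K ≠ {x} := by
  intro h
  have hx : x ∈ C ∩ K := by rw [h]; exact rfl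
  have hIndep : M.Indep (C \ {x}) := hC.diff_singleton_indep hx.1
  have hxcl : x ∈ M.closure (C \ {x}) := by
    rw [hIndep.mem_closure_iff]
    left
    rw [insert_diff_singleton, insert_eq_of_mem hx.1]
    exact hC.dep
  have hsub : C \ {x} ⊆ M.E \ K := by
    rintro y ⟨hyC, hyx⟩
    refine ⟨hC.subset_ground' hyC, fun hyK => hyx ?_⟩
    have : y ∈ C ∩ K := ⟨hyC, hyK⟩
    rwa [h] at this
  have hxcl2 : x ∈ M.closure (M.E \ K) := M.closure_subset_closure hsub hxcl
  have hKE : K ⊆ M.E := hK.subset_ground'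
  have hKind : M✶.Indep (K \ {x}) := hK.diff_singleton_indep hx.2
  have hspan : M.Spanning (M.E \ (K \ {x})) := Coindep.compl_spanning hKind
  have hEdiff : M.E \ (K \ {x}) = insert x (M.E \ K) := by
    ext y
    by_cases hyx : y = x
    · subst hyx
      simp [hC.subset_ground' hx.1]
    · simp only [mem_diff, mem_singleton_iff, mem_insert_iff, hyx, false_or]
      tauto
  rw [hEdiff] at hspan
  have hcl : M.closure (insert x (M.E \ K)) = M.E := hspan.closure_eq
  rw [closure_insert_eq_of_mem_closure hxcl2] at hcl
  have hsp2 : M.Spanning (M.E \ K) := by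
    rw [spanning_iff_closure_eq diff_subset]; exact hcl
  have hco : M.Coindep K := by rwa [coindep_iff_compl_spanning hKE]
  exact hK.dep.not_indep hco

variable {n : ℕ} {S : Fin n → Set α}

lemma spines_biUnion_finite_ncard (h2 : ∀ i, (S i).ncard = 2)
    (hdj : Pairwise (Function.onFun Disjoint S)) (I : Finset (Fin n)) :
    (⋃ i ∈ I, S i).Finite ∧ (⋃ i ∈ I, S i).ncard = 2 * I.card := by
  classical
  induction I using Finset.induction_on with
  | empty => simp
  | @insert a I ha IH =>
    have hfin : (S a).Finite := by
      obtain ⟨p, q, hpq, h⟩ := Set.ncard_eq_two.mp (h2 a)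
      rw [h]; exact (finite_singleton q).insert p
    have hdisj : Disjoint (S a) (⋃ i ∈ I, S i) := by
      rw [Set.disjoint_left]
      intro x hxa hxI
      simp only [Set.mem_iUnion, exists_prop] at hxI
      obtain ⟨i, hiI, hxi⟩ := hxI
      have hai : a ≠ i := fun h => ha (h ▸ hiI)
      exact Set.disjoint_left.mp (hdj hai) hxa hxi
    rw [Finset.set_biUnion_insert]
    refine ⟨Set.Finite.union hfin IH.1, ?_⟩
    rw [Set.ncard_union_eq hdisj hfin IH.1, IH.2, h2 a,
      Finset.card_insert_of_notMem ha]
    ring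

lemma spines_leg_injOn (h2 : ∀ i, (S i).ncard = 2)
    (hdj : Pairwise (Function.onFun Disjoint S)) {w : Fin n → α}
    (hw : ∀ i, w i ∈ S i) : Function.Injective w := by
  intro i j hij
  by_contra hne
  exact Set.disjoint_left.mp (hdj hne) (hw i) (hij ▸ hw j)

/-- The FULL SPINE lemma: if every union of `b` spines is a cocircuit, and `C` is a finite
circuit touching the spine `S j`, with enough spines avoiding `C` available,
then `S j ⊆ C`. -/
lemma spine_subset_circuit {b : ℕ} (hb : 0 < b)
    (h2 : ∀ i, (S i).ncard = 2) (hdj : Pairwise (Function.onFun Disjoint S))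
    (hco : ∀ I : Finset (Fin n), I.card = b → M.IsCocircuit' (⋃ i ∈ I, S i))
    (hC : M.IsCircuit' C) (hCfin : C.Finite) (hcard : C.ncard + b ≤ n + 1)
    {j : Fin n} (hj : (C ∩ S j).Nonempty) : S j ⊆ C := by
  classical
  by_contra hnsub
  obtain ⟨y, hyS, hyC⟩ : ∃ y, y ∈ S j ∧ y ∉ C := by
    simpa [Set.subset_def] using hnsub
  obtain ⟨x, hxC, hxS⟩ := hj
  haveI : Nonempty α := ⟨x⟩
  set meets : Finset (Fin n) := Finset.univ.filter (fun i => (C ∩ S i).Nonempty) with hmeets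
  have hjmeets : j ∈ meets := by
    simp only [hmeets, Finset.mem_filter, Finset.mem_univ, true_and]
    exact ⟨x, hxC, hxS⟩
  -- meets.card ≤ C.ncard
  set w : Fin n → α := fun i => if h : (C ∩ S i).Nonempty then h.some else x with hwdef
  have hwmem : ∀ i ∈ meets, w i ∈ C ∩ S i := by
    intro i hi
    simp only [hmeets, Finset.mem_filter, Finset.mem_univ, true_and] at hi
    simp only [hwdef, dif_pos hi]
    exact hi.some_mem
  have hinjOn : Set.InjOn w ↑meets := by
    intro i hi k hk hik
    by_contra hne
    exact Set.disjoint_left.mp (hdj hne) (hwmem i hi).2 (hik ▸ (hwmem k hk).2)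
  have hmcard : meets.card ≤ C.ncard := by
    have h1 : (w '' ↑meets).ncard = meets.card := by
      rw [Set.ncard_image_of_injOn hinjOn, Set.ncard_coe_finset]
    have h2' : w '' ↑meets ⊆ C := by
      rintro z ⟨i, hi, rfl⟩
      exact (hwmem i hi).1
    have := Set.ncard_le_ncard h2' hCfin
    omega
  -- choose b - 1 spines avoiding C
  have hrest : b - 1 ≤ (Finset.univ \ meets).card := by
    rw [Finset.card_sdiff_of_subset (Finset.subset_univ _), Finset.card_univ, Fintype.card_fin]
    omega
  obtain ⟨P, hPsub, hPcard⟩ := Finset.exists_subset_card_eq hrest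
  have hjP : j ∉ P := fun h => (Finset.mem_sdiff.mp (hPsub h)).2 hjmeets
  set I : Finset (Fin n) := insert j P with hI
  have hIcard : I.card = b := by
    rw [hI, Finset.card_insert_of_notMem hjP, hPcard]
    omega
  have hK := hco I hIcard
  -- C ∩ S j = {x}
  have hCSj : C ∩ S j = {x} := by
    apply Set.Subset.antisymm
    · rintro z ⟨hzC, hzS⟩
      obtain ⟨p, q, hpq, hS⟩ := Set.ncard_eq_two.mp (h2 j)
      rw [hS] at hzS hxS hyS
      simp only [Set.mem_insert_iff, Set.mem_singleton_iff] at hzS hxS hyS ⊢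
      rcases hzS with rfl | rfl <;> rcases hxS with rfl | rfl <;>
        rcases hyS with rfl | rfl <;> first
        | rfl
        | exact absurd hzC hyC
        | exact absurd hxC hyC
        | exact absurd rfl hpq
    · exact Set.singleton_subset_iff.mpr ⟨hxC, hxS⟩
  have hCAP : C ∩ ⋃ i ∈ P, S i = ∅ := by
    ext z
    simp only [Set.mem_inter_iff, Set.mem_iUnion, exists_prop, Set.mem_empty_iff_false,
      iff_false, not_and, not_exists]
    intro hzC i hiP hzS
    have := (Finset.mem_sdiff.mp (hPsub hiP)).2
    simp only [hmeets, Finset.mem_filter, Finset.mem_univ, true_and] at this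
    exact this ⟨z, hzC, hzS⟩
  have hCK : C ∩ (⋃ i ∈ I, S i) = {x} := by
    rw [hI, Finset.set_biUnion_insert, Set.inter_union_distrib_left, hCSj, hCAP,
      Set.union_empty]
  exact hC.inter_cocircuit_ne_singleton hK x hCK

/-- STEP 1: in an echidna (unions of `a` spines are circuits) with the cocircuit half of the
`HasProp` hypothesis, unions of `b` spines are cocircuits. -/
lemma spines_union_cocircuit {a b : ℕ} (ha : 0 < a) (hb : 0 < b)
    (hSE : ∀ i, S i ⊆ M.E) (h2 : ∀ i, (S i).ncard = 2)
    (hdj : Pairwise (Function.onFun Disjoint S))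
    (hcirc : ∀ I : Finset (Fin n), I.card = a → M.IsCircuit' (⋃ i ∈ I, S i))
    (hprop : ∀ T ⊆ M.E, T.ncard = b → ∃ K, M.IsCocircuit' K ∧ K.ncard = 2 * b ∧ T ⊆ K)
    (hn : a + 2 * b ≤ n + 1) :
    ∀ I : Finset (Fin n), I.card = b → M.IsCocircuit' (⋃ i ∈ I, S i) := by
  intro I hIb
  have hne : ∀ i, (S i).Nonempty := fun i =>
    Set.nonempty_of_ncard_ne_zero (by rw [h2 i]; omega)
  set w : Fin n → α := fun i => (hne i).some with hwdef
  have hw : ∀ i, w i ∈ S i := fun i => (hne i).some_mem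
  have hwinj : Function.Injective w := spines_leg_injOn h2 hdj hw
  set T : Set α := w '' ↑I with hT
  have hTE : T ⊆ M.E := by rintro z ⟨i, hi, rfl⟩; exact hSE i (hw i)
  have hTcard : T.ncard = b := by
    rw [hT, Set.ncard_image_of_injOn (hwinj.injOn), Set.ncard_coe_finset, hIb]
  obtain ⟨K, hK, hKcard, hTK⟩ := hprop T hTE hTcard
  have hKfin : K.Finite := Set.finite_of_ncard_ne_zero (by omega)
  have hSE' : ∀ i, S i ⊆ M✶.E := by simpa using hSE
  have hco' : ∀ I : Finset (Fin n), I.card = a → IsCocircuit' M✶ (⋃ i ∈ I, S i) := by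
    intro I hI
    show IsCircuit' M✶✶ _
    rw [dual_dual]
    exact hcirc I hI
  have hfull : ∀ i ∈ I, S i ⊆ K := by
    intro i hi
    refine spine_subset_circuit (M := M✶) ha h2 hdj hco' hK hKfin (by omega) ?_
    exact ⟨w i, hTK ⟨i, hi, rfl⟩, hw i⟩
  have hsub : (⋃ i ∈ I, S i) ⊆ K := Set.iUnion₂_subset hfull
  have hAcard := spines_biUnion_finite_ncard h2 hdj I
  have heq : (⋃ i ∈ I, S i) = K :=
    Set.eq_of_subset_of_ncard_le hsub (by rw [hAcard.2, hIb]; omega) hKfin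
  rw [heq]
  exact hK

/-- STEP 2: every element `e` off the echidna has, for each set `J` of `a - 1` spines, a
partner `f` off the echidna with `(⋃ i ∈ J, S i) ∪ {e, f}` a circuit. -/
lemma exists_partner {a b : ℕ} (ha : 0 < a) (hb : 0 < b)
    (hSE : ∀ i, S i ⊆ M.E) (h2 : ∀ i, (S i).ncard = 2)
    (hdj : Pairwise (Function.onFun Disjoint S))
    (hco : ∀ I : Finset (Fin n), I.card = b → M.IsCocircuit' (⋃ i ∈ I, S i))
    (hprop : ∀ X ⊆ M.E, X.ncard = a → ∃ C, M.IsCircuit' C ∧ C.ncard = 2 * a ∧ X ⊆ C)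
    (hn : 2 * a + b ≤ n + 1)
    {e : α} (heE : e ∈ M.E) (heS : e ∉ ⋃ i, S i)
    {J : Finset (Fin n)} (hJ : J.card = a - 1) :
    ∃ f, f ∈ M.E ∧ f ∉ (⋃ i, S i) ∧ f ≠ e ∧
      M.IsCircuit' ((⋃ i ∈ J, S i) ∪ {e, f}) := by
  classical
  have hne : ∀ i, (S i).Nonempty := fun i =>
    Set.nonempty_of_ncard_ne_zero (by rw [h2 i]; omega)
  set w : Fin n → α := fun i => (hne i).some with hwdef
  have hw : ∀ i, w i ∈ S i := fun i => (hne i).some_mem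
  have hwinj : Function.Injective w := spines_leg_injOn h2 hdj hw
  set X : Set α := insert e (w '' ↑J) with hXdef
  have heimg : e ∉ w '' ↑J := by
    rintro ⟨i, hi, rfl⟩
    exact heS (Set.mem_iUnion.mpr ⟨i, hw i⟩)
  have himgfin : (w '' ↑J).Finite := (J.finite_toSet).image w
  have hXcard : X.ncard = a := by
    rw [hXdef, Set.ncard_insert_of_notMem heimg himgfin,
      Set.ncard_image_of_injOn (hwinj.injOn), Set.ncard_coe_finset, hJ]
    omega
  have hXE : X ⊆ M.E := by
    rw [hXdef]
    exact Set.insert_subset heE (by rintro z ⟨i, hi, rfl⟩; exact hSE i (hw i))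
  obtain ⟨C, hC, hCcard, hXC⟩ := hprop X hXE hXcard
  have hCfin : C.Finite := Set.finite_of_ncard_ne_zero (by omega)
  have hfull : ∀ k : Fin n, (C ∩ S k).Nonempty → S k ⊆ C := fun k hk =>
    spine_subset_circuit hb h2 hdj hco hC hCfin (by omega) hk
  have hJfull : ∀ j ∈ J, S j ⊆ C := by
    intro j hj
    exact hfull j ⟨w j, hXC (Set.mem_insert_of_mem _ ⟨j, hj, rfl⟩), hw j⟩
  have hAJ := spines_biUnion_finite_ncard h2 hdj J
  set D : Set α := (⋃ i ∈ J, S i) ∪ {e} with hDdef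
  have heAJ : e ∉ ⋃ i ∈ J, S i := by
    intro h
    simp only [Set.mem_iUnion, exists_prop] at h
    exact heS (Set.mem_iUnion.mpr ⟨h.choose, h.choose_spec.2⟩)
  have hDfin : D.Finite := hAJ.1.union (finite_singleton e)
  have hDcard : D.ncard = 2 * a - 1 := by
    rw [hDdef, Set.union_singleton, Set.ncard_insert_of_notMem heAJ hAJ.1, hAJ.2, hJ]
    omega
  have hDC : D ⊆ C := by
    rw [hDdef]
    exact Set.union_subset (Set.iUnion₂_subset hJfull)
      (Set.singleton_subset_iff.mpr (hXC (Set.mem_insert _ _)))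
  have hdiff : (C \ D).ncard = 1 := by
    rw [Set.ncard_diff hDC hDfin]
    omega
  obtain ⟨f, hf⟩ := Set.ncard_eq_one.mp hdiff
  have hfCD : f ∈ C \ D := by rw [hf]; exact rfl
  have hCeq : C = (⋃ i ∈ J, S i) ∪ {e, f} := by
    have h1 : C = D ∪ (C \ D) := by rw [Set.union_diff_cancel hDC]
    rw [h1, hf, hDdef, Set.union_assoc, Set.singleton_union]
  have hfS : f ∉ ⋃ i, S i := by
    intro hfU
    obtain ⟨k, hfk⟩ := Set.mem_iUnion.mp hfU
    by_cases hkJ : k ∈ J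
    · exact hfCD.2 (Set.mem_union_left _ (Set.mem_iUnion₂.mpr ⟨k, hkJ, hfk⟩))
    · have hSkC : S k ⊆ C := hfull k ⟨f, hfCD.1, hfk⟩
      obtain ⟨p, q, hpq, hSk⟩ := Set.ncard_eq_two.mp (h2 k)
      have hmem : ∀ z ∈ S k, z = f := by
        intro z hz
        have hzC : z ∈ C := hSkC hz
        rw [hCeq] at hzC
        rcases hzC with hzA | hz2
        · obtain ⟨i, hi, hzi⟩ := Set.mem_iUnion₂.mp hzA
          have hik : i ≠ k := fun h => hkJ (h ▸ hi)
          exact absurd hz (Set.disjoint_left.mp (hdj hik) hzi)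
        · rcases hz2 with rfl | rfl
          · exact absurd (Set.mem_iUnion.mpr ⟨k, hz⟩) heS
          · rfl
      have hp : p = f := hmem p (by rw [hSk]; exact Set.mem_insert _ _)
      have hq : q = f := hmem q (by rw [hSk]; exact Set.mem_insert_of_mem _ rfl)
      exact hpq (hp.trans hq.symm)
  have hfe : f ≠ e := fun h => hfCD.2 (Set.mem_union_right _ (h ▸ rfl))
  exact ⟨f, hC.subset_ground' hfCD.1, hfS, hfe, hCeq ▸ hC⟩

/-- Uniqueness of partners: two circuits `(⋃ J) ∪ {e, f}` and `(⋃ K) ∪ {e, g}` force `f = g`. -/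
lemma partner_unique {a b : ℕ} (ha : 0 < a) (hb : 0 < b)
    (hSE : ∀ i, S i ⊆ M.E) (h2 : ∀ i, (S i).ncard = 2)
    (hdj : Pairwise (Function.onFun Disjoint S))
    (hcirc : ∀ I : Finset (Fin n), I.card = a → M.IsCircuit' (⋃ i ∈ I, S i))
    (hpropco : ∀ T ⊆ M.E, T.ncard = b → ∃ K, M.IsCocircuit' K ∧ K.ncard = 2 * b ∧ T ⊆ K)
    (hn : 2 * b + a ≤ n + 1) (hn2 : 2 * a + b ≤ n + 1)
    {e f g : α} (heE : e ∈ M.E) (heS : e ∉ ⋃ i, S i) (hfS : f ∉ ⋃ i, S i)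
    (hgS : g ∉ ⋃ i, S i)
    {J K : Finset (Fin n)} (hJ : J.card = a - 1) (hK : K.card = a - 1)
    (hC1 : M.IsCircuit' ((⋃ i ∈ J, S i) ∪ {e, f}))
    (hC2 : M.IsCircuit' ((⋃ i ∈ K, S i) ∪ {e, g})) : f = g := by
  classical
  -- choose b - 1 spines avoiding J ∪ K
  have hrest : b - 1 ≤ (Finset.univ \ (J ∪ K)).card := by
    have hcup : (J ∪ K).card ≤ 2 * a - 2 := by
      have := Finset.card_union_le J K
      omega
    rw [Finset.card_sdiff_of_subset (Finset.subset_univ _), Finset.card_univ, Fintype.card_fin]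
    omega
  obtain ⟨J', hJ'sub, hJ'card⟩ := Finset.exists_subset_card_eq hrest
  -- dual partner: a cocircuit (⋃ i ∈ J', S i) ∪ {e, h}
  have hSE' : ∀ i, S i ⊆ M✶.E := by simpa using hSE
  have hco' : ∀ I : Finset (Fin n), I.card = a → IsCocircuit' M✶ (⋃ i ∈ I, S i) := by
    intro I hI
    show IsCircuit' M✶✶ _
    rw [dual_dual]
    exact hcirc I hI
  have hprop' : ∀ X ⊆ M✶.E, X.ncard = b →
      ∃ C, M✶.IsCircuit' C ∧ C.ncard = 2 * b ∧ X ⊆ C := by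
    simpa [IsCocircuit'] using hpropco
  obtain ⟨h, hhE, hhS, hhe, hKco⟩ :=
    exists_partner (M := M✶) hb ha hSE' h2 hdj hco' hprop' hn (by simpa using heE) heS
      (J := J') (by omega)
  -- hKco : M✶.IsCircuit' ((⋃ i ∈ J', S i) ∪ {e, h}), i.e. a cocircuit of M
  have hKco' : M.IsCocircuit' ((⋃ i ∈ J', S i) ∪ {e, h}) := hKco
  have claim : ∀ (L : Finset (Fin n)) (x : α), L.card = a - 1 → Disjoint L J' →
      x ∉ (⋃ i, S i) → M.IsCircuit' ((⋃ i ∈ L, S i) ∪ {e, x}) → x = h := by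
    intro L x hL hdisj hxS hCx
    by_contra hxh
    have hinter : ((⋃ i ∈ L, S i) ∪ {e, x}) ∩ ((⋃ i ∈ J', S i) ∪ {e, h}) = {e} := by
      apply Set.Subset.antisymm
      · rintro z ⟨hz1, hz2⟩
        simp only [Set.mem_union, Set.mem_iUnion, exists_prop, Set.mem_insert_iff,
          Set.mem_singleton_iff] at hz1 hz2
        rcases hz1 with ⟨i, hiL, hzi⟩ | hz1
        · rcases hz2 with ⟨i', hi', hzi'⟩ | hz2
          · have hii' : i ≠ i' := fun hh =>
              Finset.disjoint_left.mp hdisj hiL (hh ▸ hi')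
            exact absurd hzi' (Set.disjoint_left.mp (hdj hii') hzi)
          · rcases hz2 with rfl | rfl
            · exact absurd (Set.mem_iUnion.mpr ⟨i, hzi⟩) heS
            · exact absurd (Set.mem_iUnion.mpr ⟨i, hzi⟩) hhS
        · rcases hz2 with ⟨i', hi', hzi'⟩ | hz2
          · rcases hz1 with rfl | rfl
            · exact absurd (Set.mem_iUnion.mpr ⟨i', hzi'⟩) heS
            · exact absurd (Set.mem_iUnion.mpr ⟨i', hzi'⟩) hxS
          · rcases hz1 with rfl | rfl
            · exact Set.mem_singleton _
            · rcases hz2 with rfl | hzh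
              · exact Set.mem_singleton _
              · exact absurd hzh hxh
      · intro z hz
        rw [Set.mem_singleton_iff] at hz
        subst hz
        exact ⟨Set.mem_union_right _ (Set.mem_insert _ _),
          Set.mem_union_right _ (Set.mem_insert _ _)⟩
    exact hCx.inter_cocircuit_ne_singleton hKco' e hinter
  have hdisjJ : Disjoint J J' := by
    rw [Finset.disjoint_left]
    intro i hiJ hiJ'
    exact (Finset.mem_sdiff.mp (hJ'sub hiJ')).2 (Finset.mem_union_left _ hiJ)
  have hdisjK : Disjoint K J' := by
    rw [Finset.disjoint_left]
    intro i hiK hiJ'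
    exact (Finset.mem_sdiff.mp (hJ'sub hiJ')).2 (Finset.mem_union_right _ hiK)
  rw [claim J f hJ hdisjJ hfS hC1, claim K g hK hdisjK hgS hC2]

/-- Helper: union over all indices of a `Fin.snoc`. -/
lemma iUnion_snoc (S : Fin n → Set α) (p : Set α) :
    (⋃ i, (Fin.snoc S p : Fin (n + 1) → Set α) i) = (⋃ i, S i) ∪ p := by
  apply Set.Subset.antisymm
  · refine Set.iUnion_subset fun i => ?_
    induction i using Fin.lastCases with
    | last => simp [Fin.snoc_last]
    | cast i =>
      rw [Fin.snoc_castSucc]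
      exact (Set.subset_iUnion S i).trans Set.subset_union_left
  · refine Set.union_subset (Set.iUnion_subset fun i => ?_) ?_
    · have := Set.subset_iUnion (Fin.snoc S p : Fin (n + 1) → Set α) i.castSucc
      rwa [Fin.snoc_castSucc] at this
    · have := Set.subset_iUnion (Fin.snoc S p : Fin (n + 1) → Set α) (Fin.last n)
      rwa [Fin.snoc_last] at this

/-- EXTENSION: an echidna not covering the ground set extends by one spine. -/
lemma extend_echidna {s t : ℕ} (hs : 0 < s) (ht : 0 < t)
    (hM : M.HasProp s (2 * s) t (2 * t))
    (hS : M.IsEchidna s S) (hn1 : s + 2 * t ≤ n + 1) (hn2 : 2 * s + t ≤ n + 1)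
    {e : α} (heE : e ∈ M.E) (heS : e ∉ ⋃ i, S i) :
    ∃ f, f ∈ M.E ∧ f ∉ (⋃ i, S i) ∧ f ≠ e ∧
      M.IsEchidna s (Fin.snoc S ({e, f} : Set α)) := by
  classical
  obtain ⟨hSE, h2, hdj, hcirc⟩ := hS
  have hco := spines_union_cocircuit hs ht hSE h2 hdj hcirc hM.2 hn1
  have hJ0 : s - 1 ≤ (Finset.univ : Finset (Fin n)).card := by
    rw [Finset.card_univ, Fintype.card_fin]; omega
  obtain ⟨J₀, _, hJ₀card⟩ := Finset.exists_subset_card_eq hJ0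
  obtain ⟨f, hfE, hfS, hfe, hC0⟩ :=
    exists_partner hs ht hSE h2 hdj hco hM.1 hn2 heE heS hJ₀card
  refine ⟨f, hfE, hfS, hfe, ?_, ?_, ?_, ?_⟩
  · -- subsets of ground set
    intro i
    induction i using Fin.lastCases with
    | last =>
      rw [Fin.snoc_last]
      exact Set.insert_subset heE (Set.singleton_subset_iff.mpr hfE)
    | cast i => rw [Fin.snoc_castSucc]; exact hSE i
  · -- cardinalities
    intro i
    induction i using Fin.lastCases with
    | last => rw [Fin.snoc_last]; exact Set.ncard_pair (Ne.symm hfe)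
    | cast i => rw [Fin.snoc_castSucc]; exact h2 i
  · -- pairwise disjoint
    have haux : ∀ i : Fin n, Disjoint (S i) ({e, f} : Set α) := by
      intro i
      rw [Set.disjoint_right]
      rintro x (rfl | rfl)
      · exact fun hx => heS (Set.mem_iUnion.mpr ⟨i, hx⟩)
      · exact fun hx => hfS (Set.mem_iUnion.mpr ⟨i, hx⟩)
    intro i j hij
    induction i using Fin.lastCases with
    | last =>
      induction j using Fin.lastCases with
      | last => exact absurd rfl hij
      | cast j =>
        simp only [Function.onFun, Fin.snoc_last, Fin.snoc_castSucc]
        exact (haux j).symm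
    | cast i =>
      induction j using Fin.lastCases with
      | last =>
        simp only [Function.onFun, Fin.snoc_castSucc, Fin.snoc_last]
        exact haux i
      | cast j =>
        simp only [Function.onFun, Fin.snoc_castSucc]
        exact hdj (fun h => hij (by rw [h]))
  · -- circuits
    intro I hI
    set K : Finset (Fin n) := Finset.univ.filter (fun i : Fin n => i.castSucc ∈ I) with hKdef
    have himg : K.image Fin.castSucc = I.erase (Fin.last n) := by
      ext x
      simp only [Finset.mem_image, hKdef, Finset.mem_filter, Finset.mem_univ, true_and,
        Finset.mem_erase]
      constructor
      · rintro ⟨k, hk, rfl⟩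
        exact ⟨Fin.castSucc_lt_last k |>.ne, hk⟩
      · rintro ⟨hxl, hxI⟩
        obtain ⟨k, rfl⟩ := Fin.exists_castSucc_eq.mpr hxl
        exact ⟨k, hxI, rfl⟩
    have hKunion : (⋃ k ∈ K, S k) = ⋃ i ∈ I.erase (Fin.last n), (Fin.snoc S ({e, f} : Set α) : Fin (n + 1) → Set α) i := by
      rw [← himg, Finset.set_biUnion_finset_image]
      apply Set.iUnion₂_congr
      intro k _
      rw [Fin.snoc_castSucc]
    by_cases hlast : Fin.last n ∈ I
    · have hKcard : K.card = s - 1 := by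
        have := Finset.card_image_of_injective K (Fin.castSucc_injective n)
        rw [himg, Finset.card_erase_of_mem hlast, hI] at this
        omega
      obtain ⟨g, hgE, hgS, hge, hCg⟩ :=
        exists_partner hs ht hSE h2 hdj hco hM.1 hn2 heE heS hKcard
      have hgf : g = f :=
        partner_unique hs ht hSE h2 hdj hcirc hM.2 (by omega) (by omega) heE heS hgS hfS
          hKcard hJ₀card hCg hC0
      have hIeq : (⋃ i ∈ I, (Fin.snoc S ({e, f} : Set α) : Fin (n + 1) → Set α) i) = (⋃ k ∈ K, S k) ∪ {e, f} := by
        conv_lhs => rw [← Finset.insert_erase hlast]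
        rw [Finset.set_biUnion_insert, Fin.snoc_last, ← hKunion, Set.union_comm]
      rw [hIeq, ← hgf]
      exact hCg
    · have hKcard : K.card = s := by
        have := Finset.card_image_of_injective K (Fin.castSucc_injective n)
        rw [himg, Finset.erase_eq_of_notMem hlast, hI] at this
        omega
      have hIeq : (⋃ i ∈ I, (Fin.snoc S ({e, f} : Set α) : Fin (n + 1) → Set α) i) = ⋃ k ∈ K, S k := by
        rw [hKunion, Finset.erase_eq_of_notMem hlast]
      rw [hIeq]
      exact hcirc K hKcard

end Aux

end Matroid

universe u

open Matroid

/-- If `M` has the `(s,2s,t,2t)`-property and an `s`-echidna `(S 1, …, S n)` with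
`n ≥ max {s+2t−1, 2s+t−1, 3s+t−3}`, then `(S 1, …, S n)` extends to a partition
`(S 1, …, S n, …, S m)` of all of `E(M)` that is both an `s`-echidna and a `t`-coechidna. -/
theorem statement4 {α : Type u} (s t n : ℕ) (hs : 0 < s) (ht : 0 < t)
    (M : Matroid α) (hE : M.E.Finite) (hM : M.HasProp s (2 * s) t (2 * t))
    (S : Fin n → Set α) (hS : M.IsEchidna s S)
    (hn : max (s + 2 * t - 1) (max (2 * s + t - 1) (3 * s + t - 3)) ≤ n) :
    ∃ (m : ℕ) (hnm : n ≤ m) (T : Fin m → Set α),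
      (∀ i : Fin n, T (Fin.castLE hnm i) = S i) ∧
      (⋃ i, T i) = M.E ∧ M.IsEchidna s T ∧ M✶.IsEchidna t T := by
  simp only [max_le_iff] at hn
  have hb1 : s + 2 * t ≤ n + 1 := by omega
  have hb2 : 2 * s + t ≤ n + 1 := by omega
  have main : ∀ k : ℕ, ∀ (n' : ℕ) (hn' : n ≤ n') (T : Fin n' → Set α),
      M.IsEchidna s T → (∀ i : Fin n, T (Fin.castLE hn' i) = S i) →
      (M.E \ ⋃ i, T i).ncard = k →
      ∃ (m : ℕ) (hnm : n ≤ m) (T' : Fin m → Set α),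
        (∀ i : Fin n, T' (Fin.castLE hnm i) = S i) ∧
        (⋃ i, T' i) = M.E ∧ M.IsEchidna s T' ∧ M✶.IsEchidna t T' := by
    intro k
    induction k using Nat.strong_induction_on with
    | _ k IH =>
      intro n' hn' T hT hcompat hk
      obtain ⟨hTE, hT2, hTdj, hTcirc⟩ := hT
      by_cases hcov : M.E ⊆ ⋃ i, T i
      · refine ⟨n', hn', T, hcompat, Set.Subset.antisymm (Set.iUnion_subset hTE) hcov,
          ⟨hTE, hT2, hTdj, hTcirc⟩, ?_⟩
        refine ⟨by simpa using hTE, hT2, hTdj, ?_⟩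
        exact spines_union_cocircuit hs ht hTE hT2 hTdj hTcirc hM.2 (by omega)
      · obtain ⟨e, heE, heT⟩ := Set.not_subset.mp hcov
        obtain ⟨f, hfE, hfT, hfe, hT'⟩ :=
          extend_echidna hs ht hM ⟨hTE, hT2, hTdj, hTcirc⟩ (by omega) (by omega) heE heT
        have hcompat' : ∀ i : Fin n, (Fin.snoc T ({e, f} : Set α) : Fin (n' + 1) → Set α)
            (Fin.castLE (hn'.trans (Nat.le_succ n')) i) = S i := by
          intro i
          have hcs : Fin.castLE (hn'.trans (Nat.le_succ n')) i
              = Fin.castSucc (Fin.castLE hn' i) := rfl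
          rw [hcs, Fin.snoc_castSucc]
          exact hcompat i
        have hUnew : (⋃ i, (Fin.snoc T ({e, f} : Set α) : Fin (n' + 1) → Set α) i)
            = (⋃ i, T i) ∪ {e, f} :=
          Matroid.iUnion_snoc T _
        have hpair_sub : ({e, f} : Set α) ⊆ M.E \ ⋃ i, T i := by
          rintro x (rfl | rfl)
          · exact ⟨heE, heT⟩
          · exact ⟨hfE, hfT⟩
        have hkge : 2 ≤ k := by
          have h1 := Set.ncard_le_ncard hpair_sub hE.diff
          rwa [Set.ncard_pair (Ne.symm hfe), hk] at h1
        have hnewdiff : M.E \ (⋃ i, (Fin.snoc T ({e, f} : Set α) : Fin (n' + 1) → Set α) i)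
            = (M.E \ ⋃ i, T i) \ {e, f} := by
          rw [hUnew, ← Set.diff_diff]
        have hkcard : ((M.E \ ⋃ i, T i) \ {e, f}).ncard = k - 2 := by
          rw [Set.ncard_diff hpair_sub (Set.toFinite _), hk,
            Set.ncard_pair (Ne.symm hfe)]
        exact IH (k - 2) (by omega) (n' + 1) (hn'.trans (Nat.le_succ n'))
          (Fin.snoc T ({e, f} : Set α)) hT' hcompat' (by rw [hnewdiff]; exact hkcard)
  exact main (M.E \ ⋃ i, S i).ncard n le_rfl S hS (fun i => rfl) rfl
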